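/- The set of points of T = Hom(Λ, ℂ*) where all generators N_Y = Π_{a∈Y}(1 − e^{−a}) (Y a cocircuit of X) vanish equals P(X) = ∪_{b∈B(X)} T(b), the union over bases b extracted from X of the finite subgroups of characters trivial on the sublattice generated by b. -/

import Mathlib

open scoped Classical

/-- Real realization of an integral vector list. -/
def XRe {s : ℕ} {ι : Type*} (X : ι → (Fin s → ℤ)) (i : ι) : Fin s → ℝ :=
  fun j => (X i j : ℝ)

/-- `b` is a basis (of `V = Λ ⊗ ℝ`) extracted from `X`. -/
def IsBasisOf {s : ℕ} {ι : Type*} (X : ι → (Fin s → ℤ)) (b : Finset ι) : Prop :=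
  LinearIndependent ℝ (fun i : ↥b => XRe X i) ∧ Submodule.span ℝ (XRe X '' ↑b) = ⊤

/-- key fact about characters: the factor `1 - χ(-a)` vanishes iff `χ a = 1`. -/
lemma char_factor_eq_zero_iff (s : ℕ) (χ : AddChar (Fin s → ℤ) ℂ) (a : Fin s → ℤ) :
    1 - χ (-a) = 0 ↔ χ a = 1 := by
  have h : χ a * χ (-a) = 1 := by
    rw [← AddChar.map_add_eq_mul, add_neg_cancel, AddChar.map_zero_eq_one]
  constructor
  · intro hz
    have h1 : χ (-a) = 1 := by linear_combination -hz
    rw [h1, mul_one] at h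
    exact h
  · intro h1
    rw [h1, one_mul] at h
    rw [h]
    ring

/-- the common zero set in `T = Hom(Λ, ℂ*)` of the generators
`N_Y = Π_{a∈Y}(1 − e^{−a})` (over all cocircuits `Y`) is
`P(X) = ∪_{b ∈ B(X)} T(b)`. -/
theorem zero_set_of_NY_eq_points_of_arrangement
    {s : ℕ} {ι : Type*} [Fintype ι] (X : ι → (Fin s → ℤ))
    (hX0 : ∀ i, X i ≠ 0)
    (hspan : Submodule.span ℝ (Set.range (XRe X)) = ⊤) :
    {χ : AddChar (Fin s → ℤ) ℂ | ∀ Y : Finset ι,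
        Submodule.span ℝ (XRe X '' ↑(Finset.univ \ Y)) ≠ ⊤ →
        ∏ i ∈ Y, (1 - χ (-(X i))) = 0} =
      ⋃ b ∈ {b : Finset ι | IsBasisOf X b},
        {χ : AddChar (Fin s → ℤ) ℂ | ∀ i ∈ b, χ (X i) = 1} := by
  ext χ
  simp only [Set.mem_setOf_eq, Set.mem_iUnion, exists_prop]
  constructor
  · intro h
    set S : Finset ι := Finset.univ.filter (fun i => χ (X i) = 1) with hSdef
    have hSspan : Submodule.span ℝ (XRe X '' ↑S) = ⊤ := by
      by_contra hns
      have hcompl : (Finset.univ \ (Finset.univ \ S) : Finset ι) = S := by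
        simp
      have hz := h (Finset.univ \ S) (by rw [hcompl]; exact hns)
      obtain ⟨i, hi, hzero⟩ := Finset.prod_eq_zero_iff.mp hz
      have h1 : χ (X i) = 1 := (char_factor_eq_zero_iff s χ (X i)).mp hzero
      have : i ∈ S := by simp [hSdef, h1]
      simp only [Finset.mem_sdiff] at hi
      exact hi.2 this
    obtain ⟨B, hBsub, hBspan, hBind⟩ := exists_linearIndependent ℝ (XRe X '' ↑S)
    have hBfin : B.Finite := (S.finite_toSet.image _).subset hBsub
    -- choose preimages
    have hpick : ∀ v : hBfin.toFinset, ∃ i, i ∈ S ∧ XRe X i = (v : Fin s → ℝ) := by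
      rintro ⟨v, hv⟩
      have : (v : Fin s → ℝ) ∈ XRe X '' ↑S := hBsub (hBfin.mem_toFinset.mp hv)
      obtain ⟨i, hi, hiv⟩ := this
      exact ⟨i, hi, hiv⟩
    set pick : hBfin.toFinset → ι := fun v => (hpick v).choose with hpickdef
    have hpickS : ∀ v, pick v ∈ S := fun v => (hpick v).choose_spec.1
    have hpickv : ∀ v, XRe X (pick v) = (v : Fin s → ℝ) :=
      fun v => (hpick v).choose_spec.2
    set b : Finset ι := hBfin.toFinset.attach.image pick with hbdef
    have hmemb : ∀ i ∈ b, ∃ v, pick v = i := by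
      intro i hi
      simp only [hbdef, Finset.mem_image, Finset.mem_attach, true_and] at hi
      exact hi
    have himg : XRe X '' ↑b = B := by
      apply Set.Subset.antisymm
      · rintro w ⟨i, hi, rfl⟩
        obtain ⟨v, rfl⟩ := hmemb i hi
        rw [hpickv v]
        exact hBfin.mem_toFinset.mp v.2
      · intro v hv
        refine ⟨pick ⟨v, hBfin.mem_toFinset.mpr hv⟩, ?_, hpickv _⟩
        simp [hbdef]
    have hinj : ∀ i ∈ b, ∀ j ∈ b, XRe X i = XRe X j → i = j := by
      intro i hi j hj hij
      obtain ⟨v, rfl⟩ := hmemb i hi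
      obtain ⟨w, rfl⟩ := hmemb j hj
      rw [hpickv v, hpickv w] at hij
      have : v = w := Subtype.ext hij
      rw [this]
    refine ⟨b, ⟨?_, ?_⟩, ?_⟩
    · -- linear independence
      set e : ↥b → ↥B := fun i => ⟨XRe X i, himg ▸ Set.mem_image_of_mem _ i.2⟩ with hedef
      have heinj : Function.Injective e := by
        rintro ⟨i, hi⟩ ⟨j, hj⟩ hij
        have : XRe X i = XRe X j := congrArg Subtype.val hij
        exact Subtype.ext (hinj i hi j hj this)
      have := hBind.comp e heinj
      exact this
    · rw [himg, hBspan, hSspan]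
    · intro i hi
      obtain ⟨v, rfl⟩ := hmemb i hi
      have := hpickS v
      simp only [hSdef, Finset.mem_filter] at this
      exact this.2
  · rintro ⟨b, ⟨hbind, hbspan⟩, hb1⟩ Y hY
    -- Y must meet b
    have hmeet : ∃ i ∈ Y, i ∈ b := by
      by_contra hno
      push_neg at hno
      have hsub : (↑b : Set ι) ⊆ ↑(Finset.univ \ Y) := by
        intro i hi
        simp only [Finset.coe_sdiff, Set.mem_diff, Finset.coe_univ, Set.mem_univ, true_and]
        intro hiY
        exact hno i hiY hi
      have : Submodule.span ℝ (XRe X '' ↑b) ≤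
          Submodule.span ℝ (XRe X '' ↑(Finset.univ \ Y)) :=
        Submodule.span_mono (Set.image_mono hsub)
      rw [hbspan, top_le_iff] at this
      exact hY this
    obtain ⟨i, hiY, hib⟩ := hmeet
    apply Finset.prod_eq_zero hiY
    exact (char_factor_eq_zero_iff s χ (X i)).mpr (hb1 i hib)
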